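/- A configuration s : Z_n × Z_n → Σ is shift-symmetric with respect to some non-zero vector if and only if it is shift-symmetric with respect to some vector w ∈ G_n, where G_n = ⋃_{p prime, p | n} G_n(p) and G_n(p) = {(0, n/p)} ∪ {(n/p, i·n/p) : 0 ≤ i ≤ p−1}. -/

import Mathlib

/-- The set of generators `G_n(p)` from the paper. -/
def Gnp (n p : ℕ) : Set (ZMod n × ZMod n) :=
  insert ((0 : ZMod n), ((n / p : ℕ) : ZMod n))
    {w | ∃ i < p, w = (((n / p : ℕ) : ZMod n), ((i * (n / p) : ℕ) : ZMod n))}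

/-- The set of generators `G_n = ⋃_{p prime, p ∣ n} G_n(p)`. -/
def Gn (n : ℕ) : Set (ZMod n × ZMod n) :=
  {w | ∃ p : ℕ, p.Prime ∧ p ∣ n ∧ w ∈ Gnp n p}

lemma shift_nsmul {n : ℕ} {A : Type} (s : ZMod n × ZMod n → A)
    (v : ZMod n × ZMod n) (h : ∀ u, s u = s (u + v)) :
    ∀ k : ℕ, ∀ u, s u = s (u + k • v) := by
  intro k
  induction k with
  | zero => simp
  | succ k ih =>
    intro u
    rw [ih u, h (u + k • v), succ_nsmul, ← add_assoc]

lemma exists_rep {n p : ℕ} [NeZero n] (hpn : p ∣ n) (hp : p ≠ 0) (a : ZMod n)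
    (ha : (p : ℕ) • a = 0) : ∃ x, a = ((n / p * x : ℕ) : ZMod n) := by
  have hav : ((a.val : ℕ) : ZMod n) = a := ZMod.natCast_rightInverse a
  have h1 : ((p * a.val : ℕ) : ZMod n) = 0 := by
    push_cast
    rw [hav, ← nsmul_eq_mul, ha]
  have h2 : n ∣ p * a.val := (ZMod.natCast_eq_zero_iff _ _).mp h1
  have h3 : p * (n / p) ∣ p * a.val := by rwa [Nat.mul_div_cancel' hpn]
  have h4 : n / p ∣ a.val := (mul_dvd_mul_iff_left hp).mp h3
  obtain ⟨x, hx⟩ := h4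
  exact ⟨x, by rw [← hav, hx]⟩

lemma cast_eq_of_modeq {n p : ℕ} (hpn : p ∣ n) {x y : ℕ} (h : x ≡ y [MOD p]) :
    ((n / p * x : ℕ) : ZMod n) = ((n / p * y : ℕ) : ZMod n) := by
  rw [ZMod.natCast_eq_natCast_iff]
  have := h.mul_left' (c := n / p)
  rwa [Nat.div_mul_cancel hpn] at this

theorem stmt_16 (n : ℕ) (hn : 2 ≤ n) (A : Type) (s : ZMod n × ZMod n → A) :
    (∃ v : ZMod n × ZMod n, v ≠ 0 ∧ ∀ u, s u = s (u + v)) ↔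
      (∃ w ∈ Gn n, ∀ u, s u = s (u + w)) := by
  haveI : NeZero n := ⟨by omega⟩
  constructor
  · rintro ⟨v, hv, hs⟩
    have hnv : n • v = 0 := by
      have h1 : ∀ a : ZMod n, n • a = 0 := fun a => by
        rw [nsmul_eq_mul, ZMod.natCast_self, zero_mul]
      have : n • v = (n • v.1, n • v.2) := rfl
      rw [this, h1, h1, Prod.mk_zero_zero]
    set m := addOrderOf v with hm
    have hmn : m ∣ n := addOrderOf_dvd_of_nsmul_eq_zero hnv
    have hm0 : m ≠ 0 := by rintro h; rw [h] at hmn; omega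
    have hm1 : m ≠ 1 := fun h => hv (AddMonoid.addOrderOf_eq_one_iff.mp h)
    set p := m.minFac with hp
    have hpp : p.Prime := Nat.minFac_prime hm1
    have hpm : p ∣ m := Nat.minFac_dvd m
    have hpn : p ∣ n := hpm.trans hmn
    set v' := (m / p) • v with hv'def
    have hpv' : (p : ℕ) • v' = 0 := by
      rw [hv'def, smul_smul, Nat.mul_div_cancel' hpm, hm, addOrderOf_nsmul_eq_zero]
    have hv' : v' ≠ 0 := by
      intro h
      have hdvd : m ∣ m / p := addOrderOf_dvd_of_nsmul_eq_zero h
      have hlt : m / p < m := Nat.div_lt_self (Nat.pos_of_ne_zero hm0) hpp.one_lt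
      have hq0 : 0 < m / p :=
        Nat.div_pos (Nat.le_of_dvd (Nat.pos_of_ne_zero hm0) hpm) hpp.pos
      have := Nat.le_of_dvd hq0 hdvd
      omega
    have hs' : ∀ u, s u = s (u + v') := fun u => shift_nsmul s v hs (m / p) u
    have hpa : (p : ℕ) • v'.1 = 0 := congrArg Prod.fst hpv'
    have hpb : (p : ℕ) • v'.2 = 0 := congrArg Prod.snd hpv'
    obtain ⟨x, hx⟩ := exists_rep hpn hpp.ne_zero v'.1 hpa
    obtain ⟨y, hy⟩ := exists_rep hpn hpp.ne_zero v'.2 hpb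
    have hdp : n / p * p = n := Nat.div_mul_cancel hpn
    have hdvd_zero : ∀ z : ℕ, p ∣ z → ((n / p * z : ℕ) : ZMod n) = 0 := by
      rintro z ⟨t, ht⟩
      rw [ZMod.natCast_eq_zero_iff, ht, ← mul_assoc, hdp]
      exact Dvd.intro t rfl
    have hcomp : ∀ (k z : ℕ), k • (((n / p * z : ℕ) : ZMod n)) =
        ((n / p * (z * k) : ℕ) : ZMod n) := by
      intro k z
      rw [nsmul_eq_mul]
      push_cast
      ring
    by_cases hpx : p ∣ x
    · -- v'.1 = 0, use (0, n/p)
      have ha0 : v'.1 = 0 := by rw [hx]; exact hdvd_zero x hpx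
      have hb0 : v'.2 ≠ 0 := fun h => hv' (Prod.ext ha0 h)
      have hpy : ¬ p ∣ y := fun h => hb0 (by rw [hy]; exact hdvd_zero y h)
      have hyp : Nat.Coprime y p := ((hpp.coprime_iff_not_dvd).mpr hpy).symm
      obtain ⟨k, -, hk1⟩ := Nat.exists_mul_mod_eq_one_of_coprime hyp hpp.one_lt
      have hmeq : y * k ≡ 1 [MOD p] := by
        show y * k % p = 1 % p
        rw [Nat.mod_eq_of_lt hpp.one_lt, hk1]
      refine ⟨k • v', ⟨p, hpp, hpn, Or.inl ?_⟩, fun u => shift_nsmul s v' hs' k u⟩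
      have h2 : k • v'.2 = ((n / p : ℕ) : ZMod n) := by
        rw [hy, hcomp, cast_eq_of_modeq hpn hmeq, mul_one]
      have h1 : k • v'.1 = 0 := by rw [ha0, smul_zero]
      exact Prod.ext h1 h2
    · have hxp : Nat.Coprime x p := ((hpp.coprime_iff_not_dvd).mpr hpx).symm
      obtain ⟨k, -, hk1⟩ := Nat.exists_mul_mod_eq_one_of_coprime hxp hpp.one_lt
      have hmeq : x * k ≡ 1 [MOD p] := by
        show x * k % p = 1 % p
        rw [Nat.mod_eq_of_lt hpp.one_lt, hk1]
      set i := y * k % p with hi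
      have hilt : i < p := Nat.mod_lt _ hpp.pos
      have hmeq2 : y * k ≡ i [MOD p] := by
        show y * k % p = i % p
        rw [hi, Nat.mod_mod_of_dvd _ dvd_rfl]
      refine ⟨k • v', ⟨p, hpp, hpn, Or.inr ⟨i, hilt, ?_⟩⟩,
        fun u => shift_nsmul s v' hs' k u⟩
      have h1 : k • v'.1 = ((n / p : ℕ) : ZMod n) := by
        rw [hx, hcomp, cast_eq_of_modeq hpn hmeq, mul_one]
      have h2 : k • v'.2 = ((i * (n / p) : ℕ) : ZMod n) := by
        rw [hy, hcomp, cast_eq_of_modeq hpn hmeq2, Nat.mul_comm]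
      exact Prod.ext h1 h2
  · rintro ⟨w, ⟨p, hpp, hpn, hw⟩, hs⟩
    refine ⟨w, ?_, hs⟩
    have hd1 : 0 < n / p := Nat.div_pos (Nat.le_of_dvd (by omega) hpn) hpp.pos
    have hd2 : n / p < n := Nat.div_lt_self (by omega) hpp.one_lt
    have hdz : ((n / p : ℕ) : ZMod n) ≠ 0 := by
      rw [Ne, ZMod.natCast_eq_zero_iff]
      intro h
      have := Nat.le_of_dvd hd1 h
      omega
    rcases hw with h | ⟨i, hi, h⟩
    · rw [h]
      intro hc
      exact hdz (congrArg Prod.snd hc)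
    · rw [h]
      intro hc
      exact hdz (congrArg Prod.fst hc)
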